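/- Let A be an artin algebra, P an indecomposable module that is both projective and injective with ℓ(P) ≥ 2, and rad P its radical. Then there is a short exact sequence 0 → rad P → P ⊕ (rad P / soc P) → P / soc P → 0, where the left map is (inclusion, projection) and the right map is induced by the projections. (Here soc P ⊆ rad P since P is not simple.) -/

import Mathlib

section
variable (A : Type*) [Ring A] (P : Type*) [AddCommGroup P] [Module A P]

/-- The radical of a module: the intersection of its maximal submodules. -/
def modRad : Submodule A P := sInf {m : Submodule A P | IsCoatom m}

/-- The socle of a module: the sum of its simple submodules. -/
def modSoc : Submodule A P := sSup {m : Submodule A P | IsAtom m}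

/-- A module is indecomposable if it is nonzero and is not the internal direct
sum of two nonzero submodules. -/
def Indecomposable' : Prop :=
  Nontrivial P ∧ ∀ N₁ N₂ : Submodule A P, IsCompl N₁ N₂ → N₁ = ⊥ ∨ N₂ = ⊥

/-- The composition length of a module, realized as the Krull dimension of its
submodule lattice. -/
noncomputable def compLength : WithBot ℕ∞ := Order.krullDim (Submodule A P)

end

/-- Let `A` be an artin algebra and `P` an indecomposable projective-injective
module with `ℓ(P) ≥ 2`, so that `soc P ⊆ rad P`.  Then the canonical sequence
`0 → rad P → P ⊕ (rad P / soc P) → P / soc P → 0`, whose left map is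
(inclusion, projection) and whose right map is induced by the projections,
is exact. -/
theorem rad_soc_canonical_sequence_exact
    (A : Type*) [Ring A] [IsArtinianRing A]
    (P : Type*) [AddCommGroup P] [Module A P]
    (hproj : Module.Projective A P) (hinj : Module.Injective A P)
    (hind : Indecomposable' A P) (hfl : IsFiniteLength A P)
    (hlen : 2 ≤ compLength A P)
    (hsub : modSoc A P ≤ modRad A P) :
    let S : Submodule A ↥(modRad A P) := (modSoc A P).comap (modRad A P).subtype
    let l : ↥(modRad A P) →ₗ[A] P × (↥(modRad A P) ⧸ S) :=
      LinearMap.prod (modRad A P).subtype S.mkQ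
    let m : (↥(modRad A P) ⧸ S) →ₗ[A] (P ⧸ modSoc A P) :=
      S.liftQ ((modSoc A P).mkQ.comp (modRad A P).subtype)
        (fun x hx => by
          simpa [LinearMap.mem_ker, Submodule.Quotient.mk_eq_zero] using (show (x : P) ∈ modSoc A P from hx))
    let r : (P × (↥(modRad A P) ⧸ S)) →ₗ[A] (P ⧸ modSoc A P) :=
      (modSoc A P).mkQ.comp (LinearMap.fst A P (↥(modRad A P) ⧸ S)) -
        m.comp (LinearMap.snd A P (↥(modRad A P) ⧸ S))
    Function.Injective l ∧ Function.Surjective r ∧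
      LinearMap.range l = LinearMap.ker r := by
  intro S l m r
  refine ⟨?_, ?_, ?_⟩
  · intro x y h
    have := congrArg Prod.fst h
    simpa [l] using Subtype.ext this
  · intro z
    obtain ⟨p, rfl⟩ := Submodule.mkQ_surjective (modSoc A P) z
    exact ⟨(p, 0), by simp [r]⟩
  · ext ⟨p, q⟩
    simp only [LinearMap.mem_range, LinearMap.mem_ker, Prod.ext_iff]
    constructor
    · rintro ⟨x, hx1, hx2⟩
      obtain ⟨y, rfl⟩ := S.mkQ_surjective q
      simp only [r, LinearMap.sub_apply, LinearMap.comp_apply, LinearMap.fst_apply,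
        LinearMap.snd_apply, m, Submodule.liftQ_apply, sub_eq_zero]
      rw [← hx1]
      have : S.mkQ x = S.mkQ y := hx2
      rw [Submodule.mkQ_apply, Submodule.mkQ_apply, Submodule.Quotient.eq] at this
      simp only [l, LinearMap.prod_apply, Pi.prod, m, Submodule.liftQ_apply,
        Submodule.mkQ_apply, LinearMap.comp_apply, Submodule.coe_subtype,
        Submodule.Quotient.eq]
      simpa [S, Submodule.mem_comap] using this
    · intro hr
      obtain ⟨y, rfl⟩ := S.mkQ_surjective q
      have h1 : Submodule.Quotient.mk (p := modSoc A P) p =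
          Submodule.Quotient.mk ((y : ↥(modRad A P)) : P) := by
        have := hr
        simp only [r, LinearMap.sub_apply, LinearMap.comp_apply, LinearMap.fst_apply,
          LinearMap.snd_apply, m, Submodule.liftQ_apply, sub_eq_zero,
          Submodule.mkQ_apply] at this
        exact this
      rw [Submodule.Quotient.eq] at h1
      have hp : p ∈ modRad A P := by
        have := hsub h1
        have := add_mem this y.2
        simpa using this
      refine ⟨⟨p, hp⟩, rfl, ?_⟩
      simp only [l, LinearMap.prod_apply, Function.prod, Submodule.mkQ_apply,
        Submodule.Quotient.eq]
      simpa [S, Submodule.mem_comap] using h1
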